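/- Let V be a prefix-free set of binary strings and δ ∈ (0, 1] such that μ_σ([V]) ≤ 1 − δ for every string σ having no prefix in V. Define V^1 = V and V^{k+1} = V^k ∗ V = {σ∗τ : σ ∈ V^k, τ ∈ V}, where ∗ is concatenation. Then for every k ≥ 1 and every string τ having no prefix in V, μ_τ([V^k]) ≤ (1 − δ)^k. -/

import Mathlib

open scoped ENNReal

/-- The length-`n` prefix of a point of Cantor space `2^ω = ℕ → Bool`, as a binary string. -/
def pre (x : ℕ → Bool) (n : ℕ) : List Bool := (List.range n).map x

/-- `σ` is a (finite) prefix of `x ∈ 2^ω`. -/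
def PrefOf (σ : List Bool) (x : ℕ → Bool) : Prop := pre x σ.length = σ

/-- The cylinder `[σ] = {x ∈ 2^ω : σ ⪯ x}`. -/
def cyl (σ : List Bool) : Set (ℕ → Bool) := {x | PrefOf σ x}

/-- `[V] = ⋃_{σ ∈ V} [σ]`. -/
def cylSet (V : Set (List Bool)) : Set (ℕ → Bool) := ⋃ σ ∈ V, cyl σ

/-- A tree: a set of binary strings closed under prefixes. -/
def IsTree (T : Set (List Bool)) : Prop := ∀ σ ∈ T, ∀ τ : List Bool, τ <+: σ → τ ∈ T

/-- A pruned tree: every node has a proper extension in the tree. -/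
def Pruned (T : Set (List Bool)) : Prop := ∀ σ ∈ T, ∃ τ ∈ T, σ <+: τ ∧ σ ≠ τ

/-- The set `[T]` of paths of a tree `T`. -/
def paths (T : Set (List Bool)) : Set (ℕ → Bool) := {x | ∀ n, pre x n ∈ T}

/-- The fair-coin (uniform) product measure on Cantor space, characterized by its
values `μ [σ] = 2^{-|σ|}` on cylinders (this determines `μ` uniquely). -/
def IsFairCoin (μ : MeasureTheory.Measure (ℕ → Bool)) : Prop :=
  ∀ σ : List Bool, μ (cyl σ) = 2⁻¹ ^ σ.length

/-- A set of strings is prefix-free: no element is a proper prefix of another. -/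
def PrefixFreeSet (D : Set (List Bool)) : Prop :=
  ∀ ρ₁ ∈ D, ∀ ρ₂ ∈ D, ρ₁ <+: ρ₂ → ρ₁ = ρ₂

/-- The measure of `A` relative to `[σ]`: `μ_σ(A) = 2^{|σ|} · μ(A ∩ [σ])`. -/
noncomputable def relMeas (μ : MeasureTheory.Measure (ℕ → Bool)) (σ : List Bool)
    (A : Set (ℕ → Bool)) : ℝ≥0∞ :=
  2 ^ σ.length * μ (A ∩ cyl σ)

/-- Concatenation of sets of strings: `V ∗ W = {σ ∗ τ : σ ∈ V, τ ∈ W}`. -/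
def concatSet (V W : Set (List Bool)) : Set (List Bool) :=
  {ρ | ∃ σ ∈ V, ∃ τ ∈ W, ρ = σ ++ τ}

/-- `iterSet V k = V^{k+1}`, where `V^1 = V` and `V^{k+1} = V^k ∗ V`. -/
def iterSet (V : Set (List Bool)) : ℕ → Set (List Bool)
  | 0 => V
  | k + 1 => concatSet (iterSet V k) V

section Aux
open MeasureTheory

-- auxiliary lemmas
lemma pre_length (x : ℕ → Bool) (n : ℕ) : (pre x n).length = n := by simp [pre]

lemma pre_prefix (x : ℕ → Bool) {m n : ℕ} (h : m ≤ n) : pre x m <+: pre x n := by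
  have : (pre x n).take m = pre x m := by
    rw [pre, pre, ← List.map_take, List.take_range, Nat.min_eq_left h]
  rw [← this]; exact List.take_prefix _ _

lemma mem_cyl {σ : List Bool} {x : ℕ → Bool} : x ∈ cyl σ ↔ pre x σ.length = σ := Iff.rfl

lemma cyl_mono {σ τ : List Bool} (h : σ <+: τ) : cyl τ ⊆ cyl σ := by
  intro x hx
  rw [mem_cyl] at hx ⊢
  have h1 : pre x σ.length <+: pre x τ.length := pre_prefix x h.length_le
  rw [hx] at h1
  rw [List.prefix_iff_eq_take, pre_length] at h1
  have h3 : σ = τ.take σ.length := List.prefix_iff_eq_take.mp h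
  rw [h1, ← h3]

lemma comparable_of_mem {σ τ : List Bool} {x : ℕ → Bool} (hσ : x ∈ cyl σ) (hτ : x ∈ cyl τ) :
    σ <+: τ ∨ τ <+: σ := by
  rw [mem_cyl] at hσ hτ
  rcases le_total σ.length τ.length with h | h
  · left; rw [← hσ, ← hτ]; exact pre_prefix x h
  · right; rw [← hσ, ← hτ]; exact pre_prefix x h

lemma disjoint_cyl {σ τ : List Bool} (h1 : ¬ σ <+: τ) (h2 : ¬ τ <+: σ) :
    Disjoint (cyl σ) (cyl τ) := by
  rw [Set.disjoint_left]
  intro x hx hy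
  rcases comparable_of_mem hx hy with h | h
  · exact h1 h
  · exact h2 h

lemma measurable_cyl (σ : List Bool) : MeasurableSet (cyl σ) := by
  have : cyl σ = ⋂ i ∈ Finset.range σ.length, {x : ℕ → Bool | x i = σ.getD i false} := by
    ext x
    simp only [mem_cyl, Set.mem_iInter, Finset.mem_range, Set.mem_setOf_eq]
    constructor
    · intro h i hi
      have := congrArg (fun l => l.getD i false) h
      simpa [pre, List.getD_eq_getElem, hi] using this
    · intro h
      apply List.ext_getElem (by simp [pre_length])
      intro i h1 h2
      have : x i = σ.getD i false := h i (by simpa [pre_length] using h1)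
      simp [pre, this, List.getD_eq_getElem, h2]
  rw [this]
  exact MeasurableSet.iInter fun i => MeasurableSet.iInter fun _ =>
    (measurable_pi_apply i) (measurableSet_singleton _)

lemma measurable_cylSet (W : Set (List Bool)) : MeasurableSet (cylSet W) :=
  MeasurableSet.biUnion (Set.to_countable W) fun σ _ => measurable_cyl σ

def minb (W : Set (List Bool)) : Set (List Bool) := {σ ∈ W | ∀ τ ∈ W, τ <+: σ → τ = σ}

lemma minb_subset (W : Set (List Bool)) : minb W ⊆ W := fun _ h => h.1

lemma minb_prefixFree (W : Set (List Bool)) : PrefixFreeSet (minb W) :=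
  fun ρ₁ h₁ ρ₂ h₂ hp => h₂.2 ρ₁ h₁.1 hp

lemma exists_minb {W : Set (List Bool)} {σ : List Bool} (hσ : σ ∈ W) :
    ∃ τ ∈ minb W, τ <+: σ := by
  have hS : {n | ∃ τ ∈ W, τ <+: σ ∧ τ.length = n}.Nonempty :=
    ⟨σ.length, σ, hσ, List.prefix_refl σ, rfl⟩
  obtain ⟨τ, hτW, hτσ, hτl⟩ := Nat.sInf_mem hS
  refine ⟨τ, ⟨hτW, ?_⟩, hτσ⟩
  intro τ' hτ' hpre
  have h1 : τ'.length ∈ {n | ∃ τ ∈ W, τ <+: σ ∧ τ.length = n} :=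
    ⟨τ', hτ', hpre.trans hτσ, rfl⟩
  exact hpre.eq_of_length (le_antisymm hpre.length_le (hτl ▸ Nat.sInf_le h1))

lemma pf_measure {μ : Measure (ℕ → Bool)} (hμ : IsFairCoin μ) {D : Set (List Bool)}
    (hD : PrefixFreeSet D) :
    μ (cylSet D) = ∑' σ : D, (2⁻¹ : ℝ≥0∞) ^ (σ : List Bool).length := by
  rw [cylSet, measure_biUnion (Set.to_countable D) ?_ (fun σ _ => measurable_cyl σ)]
  · exact tsum_congr fun σ => hμ σ
  · intro σ₁ h₁ σ₂ h₂ hne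
    exact disjoint_cyl (fun h => hne (hD _ h₁ _ h₂ h)) (fun h => hne ((hD _ h₂ _ h₁ h).symm))

lemma cylSet_minb (W : Set (List Bool)) : cylSet W = cylSet (minb W) := by
  apply Set.Subset.antisymm
  · intro x hx
    simp only [cylSet, Set.mem_iUnion] at hx ⊢
    obtain ⟨σ, hσ, hxσ⟩ := hx
    obtain ⟨τ, hτ, hpre⟩ := exists_minb hσ
    exact ⟨τ, hτ, cyl_mono hpre hxσ⟩
  · exact Set.biUnion_subset_biUnion_left (minb_subset W)

lemma shift_measure {μ : Measure (ℕ → Bool)} (hμ : IsFairCoin μ) (ρ : List Bool)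
    (W : Set (List Bool)) :
    μ (⋃ σ ∈ W, cyl (ρ ++ σ)) = 2⁻¹ ^ ρ.length * μ (cylSet W) := by
  have he : (⋃ σ ∈ W, cyl (ρ ++ σ)) = ⋃ σ ∈ minb W, cyl (ρ ++ σ) := by
    apply Set.Subset.antisymm
    · intro x hx
      simp only [Set.mem_iUnion] at hx ⊢
      obtain ⟨σ, hσ, hxσ⟩ := hx
      obtain ⟨τ, hτ, hpre⟩ := exists_minb hσ
      exact ⟨τ, hτ, cyl_mono ((List.prefix_append_right_inj ρ).mpr hpre) hxσ⟩
    · exact Set.biUnion_subset_biUnion_left (minb_subset W)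
  rw [he, measure_biUnion (Set.to_countable _) ?_ (fun σ _ => measurable_cyl _),
    cylSet_minb W, pf_measure hμ (minb_prefixFree W), ← ENNReal.tsum_mul_left]
  · exact tsum_congr fun σ => by rw [hμ, List.length_append, pow_add]
  · intro σ₁ h₁ σ₂ h₂ hne
    have pf := minb_prefixFree W
    refine disjoint_cyl ?_ ?_
    · intro h
      exact hne (pf _ h₁ _ h₂ ((List.prefix_append_right_inj ρ).mp h))
    · intro h
      exact hne ((pf _ h₂ _ h₁ ((List.prefix_append_right_inj ρ).mp h)).symm)

lemma decompV (V : Set (List Bool)) (τ : List Bool) (hτ : ¬∃ ρ ∈ V, ρ <+: τ) :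
    cylSet V ∩ cyl τ = cylSet {ρ ∈ V | τ <+: ρ} := by
  ext x
  constructor
  · rintro ⟨hx1, hx2⟩
    obtain ⟨ρ, hρ, hxρ⟩ := Set.mem_iUnion₂.mp hx1
    rcases comparable_of_mem hxρ hx2 with h | h
    · exact absurd ⟨ρ, hρ, h⟩ hτ
    · exact Set.mem_biUnion (show ρ ∈ {ρ ∈ V | τ <+: ρ} from ⟨hρ, h⟩) hxρ
  · intro hx
    obtain ⟨ρ, hρ, hxρ⟩ := Set.mem_iUnion₂.mp hx
    exact ⟨Set.mem_biUnion hρ.1 hxρ, cyl_mono hρ.2 hxρ⟩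

lemma decomp (V W : Set (List Bool)) (τ : List Bool) (hτ : ¬∃ ρ ∈ V, ρ <+: τ) :
    cylSet (concatSet V W) ∩ cyl τ = ⋃ ρ ∈ {ρ ∈ V | τ <+: ρ}, ⋃ σ ∈ W, cyl (ρ ++ σ) := by
  ext x
  constructor
  · rintro ⟨hx1, hx2⟩
    simp only [cylSet, Set.mem_iUnion] at hx1
    obtain ⟨π, ⟨ρ, hρ, σ, hσ, rfl⟩, hxπ⟩ := hx1
    have hxρ : x ∈ cyl ρ := cyl_mono (List.prefix_append ρ σ) hxπ
    rcases comparable_of_mem hxρ hx2 with h | h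
    · exact absurd ⟨ρ, hρ, h⟩ hτ
    · exact Set.mem_biUnion (show ρ ∈ {ρ ∈ V | τ <+: ρ} from ⟨hρ, h⟩)
        (Set.mem_biUnion hσ hxπ)
  · intro hx
    obtain ⟨ρ, hρ, hx2⟩ := Set.mem_iUnion₂.mp hx
    obtain ⟨σ, hσ, hxρσ⟩ := Set.mem_iUnion₂.mp hx2
    refine ⟨?_, cyl_mono hρ.2 (cyl_mono (List.prefix_append ρ σ) hxρσ)⟩
    exact Set.mem_biUnion (show ρ ++ σ ∈ concatSet V W from ⟨ρ, hρ.1, σ, hσ, rfl⟩) hxρσ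

lemma concatSet_assoc (U V W : Set (List Bool)) :
    concatSet (concatSet U V) W = concatSet U (concatSet V W) := by
  ext π
  constructor
  · rintro ⟨_, ⟨σ, hσ, τ, hτ, rfl⟩, ω, hω, rfl⟩
    exact ⟨σ, hσ, τ ++ ω, ⟨τ, hτ, ω, hω, rfl⟩, List.append_assoc σ τ ω⟩
  · rintro ⟨σ, hσ, _, ⟨τ, hτ, ω, hω, rfl⟩, rfl⟩
    exact ⟨σ ++ τ, ⟨σ, hσ, τ, hτ, rfl⟩, ω, hω, (List.append_assoc σ τ ω).symm⟩

lemma iterSet_succ' (V : Set (List Bool)) (k : ℕ) :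
    iterSet V (k + 1) = concatSet V (iterSet V k) := by
  induction k with
  | zero => rfl
  | succ k ih =>
    show concatSet (iterSet V (k + 1)) V = concatSet V (iterSet V (k + 1))
    conv_lhs => rw [ih]
    rw [concatSet_assoc]
    rfl

lemma cyl_nil : cyl ([] : List Bool) = Set.univ := by
  ext x; simp [cyl, PrefOf, pre]

end Aux

/-- If `V` is prefix-free and `μ_σ([V]) ≤ 1 - δ` for every `σ` having
no prefix in `V`, then `μ_τ([V^k]) ≤ (1 - δ)^k` for every `k ≥ 1` and every `τ` having
no prefix in `V`. -/
theorem stmt_11 (μ : MeasureTheory.Measure (ℕ → Bool)) (hμ : IsFairCoin μ)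
    (V : Set (List Bool)) (hV : PrefixFreeSet V)
    (δ : ℝ) (hδ0 : 0 < δ) (hδ1 : δ ≤ 1)
    (hbound : ∀ σ : List Bool, (¬∃ ρ ∈ V, ρ <+: σ) →
      relMeas μ σ (cylSet V) ≤ ENNReal.ofReal (1 - δ)) :
    ∀ (k : ℕ) (τ : List Bool), (¬∃ ρ ∈ V, ρ <+: τ) →
      relMeas μ τ (cylSet (iterSet V k)) ≤ ENNReal.ofReal ((1 - δ) ^ (k + 1)) := by
  intro k
  induction k with
  | zero =>
    intro τ hτ
    simpa [iterSet] using hbound τ hτ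
  | succ k ih =>
    intro τ hτ
    have hnilV : ¬∃ ρ ∈ V, ρ <+: ([] : List Bool) := by
      rintro ⟨ρ, hρ, hpre⟩
      rw [List.prefix_nil] at hpre
      exact hτ ⟨ρ, hρ, hpre ▸ List.nil_prefix⟩
    have hM : μ (cylSet (iterSet V k)) ≤ ENNReal.ofReal ((1 - δ) ^ (k + 1)) := by
      have h := ih [] hnilV
      simpa [relMeas, cyl_nil] using h
    have hDpf : PrefixFreeSet {ρ ∈ V | τ <+: ρ} :=
      fun ρ₁ h₁ ρ₂ h₂ hp => hV ρ₁ h₁.1 ρ₂ h₂.1 hp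
    have hdisj : Set.PairwiseDisjoint {ρ ∈ V | τ <+: ρ}
        (fun ρ => ⋃ σ ∈ iterSet V k, cyl (ρ ++ σ)) := by
      intro ρ₁ h₁ ρ₂ h₂ hne
      have hd : Disjoint (cyl ρ₁) (cyl ρ₂) :=
        disjoint_cyl (fun h => hne (hDpf _ h₁ _ h₂ h)) (fun h => hne ((hDpf _ h₂ _ h₁ h).symm))
      exact hd.mono (Set.iUnion₂_subset fun σ _ => cyl_mono (List.prefix_append ρ₁ σ))
        (Set.iUnion₂_subset fun σ _ => cyl_mono (List.prefix_append ρ₂ σ))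
    have key : μ (cylSet (iterSet V (k + 1)) ∩ cyl τ)
        = μ (cylSet V ∩ cyl τ) * μ (cylSet (iterSet V k)) := by
      rw [iterSet_succ', decomp V (iterSet V k) τ hτ,
        MeasureTheory.measure_biUnion (Set.to_countable _) hdisj
          (fun ρ _ => MeasurableSet.biUnion (Set.to_countable _) fun σ _ => measurable_cyl _),
        decompV V τ hτ, pf_measure hμ hDpf, ← ENNReal.tsum_mul_right]
      exact tsum_congr fun ρ => shift_measure hμ ρ _
    calc relMeas μ τ (cylSet (iterSet V (k + 1)))
        = 2 ^ τ.length * (μ (cylSet V ∩ cyl τ) * μ (cylSet (iterSet V k))) := by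
          rw [relMeas, key]
      _ = relMeas μ τ (cylSet V) * μ (cylSet (iterSet V k)) := by
          rw [relMeas, mul_assoc]
      _ ≤ ENNReal.ofReal (1 - δ) * ENNReal.ofReal ((1 - δ) ^ (k + 1)) :=
          mul_le_mul' (hbound τ hτ) hM
      _ = ENNReal.ofReal ((1 - δ) ^ (k + 1 + 1)) := by
          rw [← ENNReal.ofReal_mul (by linarith), ← pow_succ']
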